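/- arXiv:2108.03455 — 5 statements merged into one kernel-verified Lean document; each statement's English description precedes it below -/
import Mathlib

section
/- For every integer t ≥ 0 and every vertex v reachable from s, D_{2t+1}(v) is at most the weight of every directed path from s to v that has at most ℓ(v) + t edges (i.e., of every t+light path from s to v). -/
/-- `L` is a directed walk from `u` to `v`: a nonempty list of vertices starting at `u`,
ending at `v`, with consecutive vertices joined by edges. Its number of edges is `L.length - 1`. -/
def IsWalk {V : Type} (E : V → V → Prop) (u v : V) (L : List V) : Prop :=
  L ≠ [] ∧ L.head? = some u ∧ L.getLast? = some v ∧ L.Chain' E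

/-- A directed path: a walk with pairwise distinct vertices. -/
def IsPath {V : Type} (E : V → V → Prop) (u v : V) (L : List V) : Prop :=
  IsWalk E u v L ∧ L.Nodup

/-- The weight of a walk: the sum of the weights of its consecutive edges
(the trivial walk has weight 0). -/
def walkWeight {V : Type} (w : V → V → ℝ) (L : List V) : ℝ :=
  ((L.zip L.tail).map fun e => w e.1 e.2).sum

/-- `v` is reachable from `u`. -/
def Reaches {V : Type} (E : V → V → Prop) (u v : V) : Prop :=
  ∃ L, IsWalk E u v L

/-- BFS level: the minimum number of edges of a directed walk from `s` to `v`. -/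
noncomputable def level {V : Type} (E : V → V → Prop) (s v : V) : ℕ :=
  sInf {k | ∃ L, IsWalk E s v L ∧ L.length = k + 1}

/-- The forward pass: `D'(v_j) = min (D(v_j), min over edges (v_i,v_j) with i < j of
`D'(v_i) + w(v_i,v_j))`, computed for `j` in increasing order (over the empty set the
inner minimum is `+∞`, so in particular `D'(v_1) = D(v_1)`). -/
noncomputable def forwardPass (n : ℕ) (E : Fin n → Fin n → Prop) [DecidableRel E]
    (w : Fin n → Fin n → ℝ) (D : Fin n → WithTop ℝ) : Fin n → WithTop ℝ
  | j =>
    min (D j)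
      (((Finset.univ.filter (fun i : Fin n => i < j ∧ E i j)).attach).inf
        (fun i => forwardPass n E w D i.1 + (w i.1 j : WithTop ℝ)))
  termination_by j => j.val
  decreasing_by
    exact (Finset.mem_filter.mp i.2).2.1

/-- The backward pass: `D'(v_j) = min (D(v_j), min over edges (v_i,v_j) with i > j of
`D'(v_i) + w(v_i,v_j))`, computed for `j` in decreasing order (in particular
`D'(v_n) = D(v_n)`). -/
noncomputable def backwardPass (n : ℕ) (E : Fin n → Fin n → Prop) [DecidableRel E]
    (w : Fin n → Fin n → ℝ) (D : Fin n → WithTop ℝ) : Fin n → WithTop ℝ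
  | j =>
    min (D j)
      (((Finset.univ.filter (fun i : Fin n => j < i ∧ E i j)).attach).inf
        (fun i => backwardPass n E w D i.1 + (w i.1 j : WithTop ℝ)))
  termination_by j => n - j.val
  decreasing_by
    have h1 : j.val < i.1.val := (Finset.mem_filter.mp i.2).2.1
    have h2 : i.1.val < n := i.1.isLt
    omega

/-- `Dseq n E w s k` is `D_k` : `D_0(s) = 0`, `D_0 = +∞` elsewhere; `D_1` is the forward
pass of `D_0`; `D_{2k}` is the backward pass of `D_{2k-1}`; `D_{2k+1}` is the forward pass
of `D_{2k}` (for `k ≥ 1`). -/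
noncomputable def Dseq (n : ℕ) (E : Fin n → Fin n → Prop) [DecidableRel E]
    (w : Fin n → Fin n → ℝ) (s : Fin n) : ℕ → Fin n → WithTop ℝ
  | 0 => fun j => if j = s then 0 else ⊤
  | (k + 1) =>
    if k % 2 = 0 then forwardPass n E w (Dseq n E w s k)
    else backwardPass n E w (Dseq n E w s k)


section Helpers
variable (n : ℕ) (E : Fin n → Fin n → Prop) [DecidableRel E] (w : Fin n → Fin n → ℝ)

lemma forwardPass_le (D : Fin n → WithTop ℝ) (j : Fin n) :
    forwardPass n E w D j ≤ D j := by
  rw [forwardPass]; exact min_le_left _ _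

lemma forwardPass_relax (D : Fin n → WithTop ℝ) {i j : Fin n} (hij : i < j) (hE : E i j) :
    forwardPass n E w D j ≤ forwardPass n E w D i + (w i j : WithTop ℝ) := by
  rw [forwardPass]
  refine le_trans (min_le_right _ _) ?_
  have hm : i ∈ Finset.univ.filter (fun i : Fin n => i < j ∧ E i j) := by
    simp [hij, hE]
  exact Finset.inf_le (Finset.mem_attach _ ⟨i, hm⟩)

lemma backwardPass_le (D : Fin n → WithTop ℝ) (j : Fin n) :
    backwardPass n E w D j ≤ D j := by
  rw [backwardPass]; exact min_le_left _ _

lemma backwardPass_relax (D : Fin n → WithTop ℝ) {i j : Fin n} (hij : j < i) (hE : E i j) :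
    backwardPass n E w D j ≤ backwardPass n E w D i + (w i j : WithTop ℝ) := by
  rw [backwardPass]
  refine le_trans (min_le_right _ _) ?_
  have hm : i ∈ Finset.univ.filter (fun i : Fin n => j < i ∧ E i j) := by
    simp [hij, hE]
  exact Finset.inf_le (Finset.mem_attach _ ⟨i, hm⟩)

variable (s : Fin n)

lemma Dseq_succ_le (k : ℕ) (j : Fin n) :
    Dseq n E w s (k + 1) j ≤ Dseq n E w s k j := by
  rw [Dseq]
  split
  · exact forwardPass_le n E w _ j
  · exact backwardPass_le n E w _ j

lemma Dseq_anti {m k : ℕ} (h : m ≤ k) (j : Fin n) :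
    Dseq n E w s k j ≤ Dseq n E w s m j := by
  induction k with
  | zero => simp_all
  | succ k ih =>
    rcases Nat.lt_or_ge m (k+1) with h' | h'
    · exact le_trans (Dseq_succ_le n E w s k j) (ih (Nat.lt_succ_iff.mp h'))
    · have : m = k + 1 := le_antisymm h h'
      simp [this]

lemma Dseq_odd (a : ℕ) :
    Dseq n E w s (2 * a + 1) = forwardPass n E w (Dseq n E w s (2 * a)) := by
  rw [Dseq]; simp [Nat.mul_mod_right]

lemma Dseq_even (a : ℕ) :
    Dseq n E w s (2 * a + 2) = backwardPass n E w (Dseq n E w s (2 * a + 1)) := by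
  show Dseq n E w s ((2*a+1) + 1) = _
  rw [Dseq]
  have : (2 * a + 1) % 2 = 1 := by omega
  simp [this]

lemma Dseq_relax_odd (a : ℕ) {u v : Fin n} (huv : u < v) (hE : E u v) :
    Dseq n E w s (2 * a + 1) v ≤ Dseq n E w s (2 * a + 1) u + (w u v : WithTop ℝ) := by
  rw [Dseq_odd]; exact forwardPass_relax n E w _ huv hE

lemma Dseq_relax_even (a : ℕ) {u v : Fin n} (huv : v < u) (hE : E u v) :
    Dseq n E w s (2 * a + 2) v ≤ Dseq n E w s (2 * a + 2) u + (w u v : WithTop ℝ) := by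
  rw [Dseq_even]; exact backwardPass_relax n E w _ huv hE

end Helpers


section Walks
variable {V : Type} {E : V → V → Prop}

lemma edges_concat (M : List V) (hM : M ≠ []) (v : V) :
    (M ++ [v]).zip (M ++ [v]).tail = M.zip M.tail ++ [(M.getLast hM, v)] := by
  induction M with
  | nil => simp at hM
  | cons a M ih =>
    cases M with
    | nil => simp
    | cons b M =>
      have := ih (by simp)
      simp only [List.cons_append, List.tail_cons, List.zip_cons_cons] at this ⊢
      rw [this]
      congr 1

lemma walkWeight_concat (w : V → V → ℝ) (M : List V) (hM : M ≠ []) (v : V) :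
    walkWeight w (M ++ [v]) = walkWeight w M + w (M.getLast hM) v := by
  unfold walkWeight
  rw [edges_concat M hM v]
  simp

lemma isWalk_concat {s u v : V} {M : List V} (hW : IsWalk E s u M) (hE : E u v) :
    IsWalk E s v (M ++ [v]) := by
  obtain ⟨hne, hhead, hlast, hchain⟩ := hW
  refine ⟨by simp, ?_, ?_, ?_⟩
  · rw [List.head?_append_of_ne_nil _ hne]  -- may need adjusting
    exact hhead
  · simp [List.getLast?_append]
  · rw [show List.Chain' E (M ++ [v]) = List.IsChain E (M ++ [v]) from rfl, List.isChain_append]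
    refine ⟨hchain, List.isChain_singleton _, ?_⟩
    intro x hx y hy
    simp at hy
    subst hy
    rw [hlast] at hx
    simp at hx
    subst hx
    exact hE

lemma isWalk_concat_iff {s v : V} {M : List V} (hM : M ≠ []) 
    (hW : IsWalk E s v (M ++ [v])) :
    IsWalk E s (M.getLast hM) M ∧ E (M.getLast hM) v := by
  obtain ⟨hne, hhead, hlast, hchain⟩ := hW
  rw [show List.Chain' E (M ++ [v]) = List.IsChain E (M ++ [v]) from rfl, List.isChain_append] at hchain
  obtain ⟨hc1, _, hc3⟩ := hchain
  constructor
  · refine ⟨hM, ?_, ?_, hc1⟩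
    · rw [List.head?_append_of_ne_nil _ hM] at hhead
      exact hhead
    · exact List.getLast?_eq_getLast hM ▸ rfl
  · exact hc3 _ (by rw [List.getLast?_eq_getLast hM]; rfl) v (by simp)

lemma reaches_of_walk {s v : V} {L : List V} (hW : IsWalk E s v L) : Reaches E s v :=
  ⟨L, hW⟩

lemma isWalk_singleton (s : V) : IsWalk E s s [s] :=
  ⟨by simp, rfl, rfl, List.isChain_singleton _⟩

lemma level_self (s : V) : level E s s = 0 :=
  Nat.eq_zero_of_le_zero (Nat.sInf_le ⟨[s], isWalk_singleton s, rfl⟩)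

lemma level_exists {s v : V} (h : Reaches E s v) :
    ∃ L, IsWalk E s v L ∧ L.length = level E s v + 1 := by
  obtain ⟨L, hL⟩ := h
  have hne : {k | ∃ L, IsWalk E s v L ∧ L.length = k + 1}.Nonempty := by
    refine ⟨L.length - 1, L, hL, ?_⟩
    have : L ≠ [] := hL.1
    have : 0 < L.length := List.length_pos_iff.mpr this
    omega
  exact Nat.sInf_mem hne

lemma level_succ_le {s u v : V} (h : Reaches E s u) (hE : E u v) :
    level E s v ≤ level E s u + 1 := by
  obtain ⟨M, hM, hlen⟩ := level_exists h
  have hMne : M ≠ [] := hM.1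
  have hu : M.getLast hMne = u := by
    have := hM.2.2.1
    rw [List.getLast?_eq_getLast hMne] at this
    exact Option.some_injective _ this
  have : IsWalk E s v (M ++ [v]) := isWalk_concat hM (hu ▸ hE)
  refine Nat.sInf_le ⟨M ++ [v], this, ?_⟩
  simp [hlen]

end Walks

/-- number of backward edges of a walk in `Fin n` -/
def backCount {n : ℕ} (L : List (Fin n)) : ℕ :=
  ((L.zip L.tail).filter (fun e => e.2 < e.1)).length

lemma backCount_concat {n : ℕ} (M : List (Fin n)) (hM : M ≠ []) (v : Fin n) :
    backCount (M ++ [v]) =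
      backCount M + (if v < M.getLast hM then 1 else 0) := by
  unfold backCount
  rw [edges_concat M hM v]
  by_cases h : v < M.getLast hM <;> simp [List.filter_append, h]

lemma level_backCount {n : ℕ} {E : Fin n → Fin n → Prop} {s : Fin n}
    (horder : ∀ i j : Fin n, i < j → Reaches E s i → Reaches E s j →
      level E s i ≤ level E s j)
    (L : List (Fin n)) :
    ∀ v : Fin n, IsWalk E s v L → level E s v + backCount L + 1 ≤ L.length := by
  induction L using List.reverseRecOn with
  | nil => intro v hW; exact absurd rfl hW.1
  | append_singleton M x ih =>
    intro v hW
    have hx : x = v := by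
      have := hW.2.2.1
      simp [List.getLast?_append] at this
      exact this
    subst hx
    rcases eq_or_ne M [] with hM | hM
    · subst hM
      have : level E s x = 0 := by
        have hhead := hW.2.1
        simp at hhead
        subst hhead
        exact level_self x
      simp [this, backCount]
    · obtain ⟨hWM, hE⟩ := isWalk_concat_iff hM hW
      set u := M.getLast hM with hu
      have hMlen := ih u hWM
      have hru : Reaches E s u := reaches_of_walk hWM
      have hrx : Reaches E s x := reaches_of_walk hW
      rw [backCount_concat M hM x]
      by_cases h : x < u
      · have : level E s x ≤ level E s u := horder x u h hrx hru
        simp only [← hu, h, if_true]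
        simp only [List.length_append, List.length_singleton]
        omega
      · have : level E s x ≤ level E s u + 1 := level_succ_le hru hE
        simp only [← hu, h, if_false]
        simp only [List.length_append, List.length_singleton]
        omega


lemma Dseq_main {n : ℕ} {E : Fin n → Fin n → Prop} [DecidableRel E]
    {w : Fin n → Fin n → ℝ} {s : Fin n} (L : List (Fin n)) :
    ∀ v : Fin n, IsWalk E s v L → L.Nodup → ∀ a : ℕ, backCount L ≤ a →
      Dseq n E w s (2 * a + 1) v ≤ (walkWeight w L : WithTop ℝ) := by
  induction L using List.reverseRecOn with
  | nil => intro v hW; exact absurd rfl hW.1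
  | append_singleton M x ih =>
    intro v hW hnd a hb
    have hx : x = v := by
      have := hW.2.2.1
      simp [List.getLast?_append] at this
      exact this
    subst hx
    rcases eq_or_ne M [] with hM | hM
    · subst hM
      have hhead := hW.2.1
      simp at hhead
      have h0 : Dseq n E w s 0 x = 0 := by rw [Dseq]; simp [hhead]
      have : Dseq n E w s (2 * a + 1) x ≤ Dseq n E w s 0 x :=
        Dseq_anti n E w s (Nat.zero_le _) x
      rw [h0] at this
      simpa [walkWeight] using this
    · obtain ⟨hWM, hE⟩ := isWalk_concat_iff hM hW
      set u := M.getLast hM with hu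
      have hndM : M.Nodup := (List.nodup_append'.mp hnd).1
      have hxM : x ∉ M := by
        have hdisj := (List.nodup_append'.mp hnd).2.2
        exact fun hmem => hdisj hmem (by simp)
      have hne : u ≠ x := fun h => hxM (h ▸ List.getLast_mem hM)
      have hwt : (walkWeight w (M ++ [x]) : WithTop ℝ) =
          (walkWeight w M : WithTop ℝ) + (w u x : WithTop ℝ) := by
        rw [walkWeight_concat w M hM x, WithTop.coe_add]
      rw [backCount_concat M hM x] at hb
      rcases lt_or_gt_of_ne hne with h | h
      · -- forward edge u < x
        have hb' : backCount M ≤ a := by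
          by_cases hc : x < u <;> simp [hc, ← hu] at hb <;> omega
        have hIH := ih u hWM hndM a hb'
        calc Dseq n E w s (2 * a + 1) x
            ≤ Dseq n E w s (2 * a + 1) u + (w u x : WithTop ℝ) :=
              Dseq_relax_odd n E w s a h hE
          _ ≤ (walkWeight w M : WithTop ℝ) + (w u x : WithTop ℝ) :=
              add_le_add_left hIH _
          _ = _ := hwt.symm
      · -- backward edge x < u
        simp only [← hu, h, if_true] at hb
        obtain ⟨a', rfl⟩ : ∃ a', a = a' + 1 := ⟨a - 1, by omega⟩
        have hb' : backCount M ≤ a' := by omega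
        have hIH := ih u hWM hndM a' hb'
        have hstep : Dseq n E w s (2 * a' + 2) x ≤ (walkWeight w (M ++ [x]) : WithTop ℝ) := by
          calc Dseq n E w s (2 * a' + 2) x
              ≤ Dseq n E w s (2 * a' + 2) u + (w u x : WithTop ℝ) :=
                Dseq_relax_even n E w s a' h hE
            _ ≤ Dseq n E w s (2 * a' + 1) u + (w u x : WithTop ℝ) :=
                add_le_add_left (Dseq_succ_le n E w s _ u) _
            _ ≤ (walkWeight w M : WithTop ℝ) + (w u x : WithTop ℝ) :=
                add_le_add_left hIH _
            _ = _ := hwt.symm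
        refine le_trans ?_ hstep
        exact Dseq_anti n E w s (by omega) x

/-- For every integer `t ≥ 0` and every vertex `v` reachable from the
source `s = v_1` (here `V = Fin n` is enumerated so that BFS levels are nondecreasing and
unreachable vertices come after all reachable ones), `D_{2t+1}(v)` is at most the weight
of every directed path from `s` to `v` with at most `ℓ(v) + t` edges (i.e. of every
`t+`light path from `s` to `v`). -/
theorem stmt0 (n : ℕ) (E : Fin n → Fin n → Prop) [DecidableRel E]
    (w : Fin n → Fin n → ℝ) (s : Fin n) (hs : s.val = 0)
    (horder : ∀ i j : Fin n, i < j → Reaches E s i → Reaches E s j →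
      level E s i ≤ level E s j)
    (hafter : ∀ i j : Fin n, i < j → Reaches E s j → Reaches E s i)
    (t : ℕ) (v : Fin n) (hv : Reaches E s v)
    (L : List (Fin n)) (hL : IsPath E s v L) (hlen : L.length ≤ level E s v + t + 1) :
    Dseq n E w s (2 * t + 1) v ≤ (walkWeight w L : WithTop ℝ) := by
  obtain ⟨hW, hnd⟩ := hL
  have hlb := level_backCount horder L v hW
  exact Dseq_main L v hW hnd t (by omega)
end

section
/- For every k ≥ 0 and every vertex v, if D_k(v) < +∞ then there exists a directed walk from s to v whose weight equals D_k(v). -/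
lemma walkWeight_cons_cons {V : Type} (w : V → V → ℝ) (a b : V) (t : List V) :
    walkWeight w (a :: b :: t) = w a b + walkWeight w (b :: t) := by
  simp [walkWeight]

lemma walkWeight_concat_s1 {V : Type} (w : V → V → ℝ) :
    ∀ (L : List V) (i j : V), L.getLast? = some i →
      walkWeight w (L ++ [j]) = walkWeight w L + w i j
  | [], i, j, h => by simp at h
  | [a], i, j, h => by
    simp at h
    subst h
    simp [walkWeight]
  | a :: b :: t, i, j, h => by
    have h' : (b :: t).getLast? = some i := by simpa using h
    have hrec := walkWeight_concat_s1 w (b :: t) i j h'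
    rw [List.cons_append] at hrec
    rw [List.cons_append, List.cons_append, walkWeight_cons_cons, walkWeight_cons_cons, hrec]
    ring

lemma isWalk_concat_s1 {V : Type} {E : V → V → Prop} {s i j : V} {L : List V}
    (h : IsWalk E s i L) (hij : E i j) : IsWalk E s j (L ++ [j]) := by
  obtain ⟨hne, hhd, hlast, hch⟩ := h
  refine ⟨by simp, ?_, by simp, ?_⟩
  · cases L with
    | nil => exact absurd rfl hne
    | cons a t => simpa using hhd
  · refine List.IsChain.append hch (List.isChain_singleton j) ?_
    intro x hx y hy
    simp at hy
    rw [hlast] at hx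
    simp at hx
    subst hx; subst hy
    exact hij

lemma fp_good (n : ℕ) (E : Fin n → Fin n → Prop) [DecidableRel E]
    (w : Fin n → Fin n → ℝ) (s : Fin n) (D : Fin n → WithTop ℝ)
    (hD : ∀ v, D v < ⊤ → ∃ L, IsWalk E s v L ∧ D v = (walkWeight w L : WithTop ℝ)) :
    ∀ v, forwardPass n E w D v < ⊤ →
      ∃ L, IsWalk E s v L ∧ forwardPass n E w D v = (walkWeight w L : WithTop ℝ) := by
  have key : ∀ m, ∀ v : Fin n, v.val < m → forwardPass n E w D v < ⊤ →
      ∃ L, IsWalk E s v L ∧ forwardPass n E w D v = (walkWeight w L : WithTop ℝ) := by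
    intro m
    induction m with
    | zero => intro v hv; omega
    | succ m ih =>
      intro v hv h
      rw [forwardPass] at h ⊢
      rcases min_cases (D v)
        (((Finset.univ.filter (fun i : Fin n => i < v ∧ E i v)).attach).inf
          (fun i => forwardPass n E w D i.1 + (w i.1 v : WithTop ℝ))) with
        ⟨heq, _⟩ | ⟨heq, _⟩
      · rw [heq] at h ⊢
        exact hD v h
      · rw [heq] at h ⊢
        have hne : ((Finset.univ.filter (fun i : Fin n => i < v ∧ E i v)).attach).Nonempty := by
          by_contra hemp
          rw [Finset.not_nonempty_iff_eq_empty] at hemp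
          rw [hemp, Finset.inf_empty] at h
          exact absurd h (lt_irrefl ⊤)
        obtain ⟨i, _, hinf⟩ := Finset.exists_mem_eq_inf _ hne
          (fun i => forwardPass n E w D i.1 + (w i.1 v : WithTop ℝ))
        obtain ⟨-, hlt, hE⟩ := Finset.mem_filter.mp i.2
        rw [hinf] at h ⊢
        have hfi : forwardPass n E w D i.1 < ⊤ := (WithTop.add_lt_top.mp h).1
        obtain ⟨L, hWalk, hW⟩ := ih i.1 (by have := hlt; omega) hfi
        refine ⟨L ++ [v], isWalk_concat_s1 hWalk hE, ?_⟩
        rw [hW, walkWeight_concat_s1 w L i.1 v hWalk.2.2.1]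
        push_cast
        ring
  intro v
  exact key (v.val + 1) v (by omega)

lemma bp_good (n : ℕ) (E : Fin n → Fin n → Prop) [DecidableRel E]
    (w : Fin n → Fin n → ℝ) (s : Fin n) (D : Fin n → WithTop ℝ)
    (hD : ∀ v, D v < ⊤ → ∃ L, IsWalk E s v L ∧ D v = (walkWeight w L : WithTop ℝ)) :
    ∀ v, backwardPass n E w D v < ⊤ →
      ∃ L, IsWalk E s v L ∧ backwardPass n E w D v = (walkWeight w L : WithTop ℝ) := by
  have key : ∀ m, ∀ v : Fin n, n - v.val < m → backwardPass n E w D v < ⊤ →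
      ∃ L, IsWalk E s v L ∧ backwardPass n E w D v = (walkWeight w L : WithTop ℝ) := by
    intro m
    induction m with
    | zero => intro v hv; omega
    | succ m ih =>
      intro v hv h
      rw [backwardPass] at h ⊢
      rcases min_cases (D v)
        (((Finset.univ.filter (fun i : Fin n => v < i ∧ E i v)).attach).inf
          (fun i => backwardPass n E w D i.1 + (w i.1 v : WithTop ℝ))) with
        ⟨heq, _⟩ | ⟨heq, _⟩
      · rw [heq] at h ⊢
        exact hD v h
      · rw [heq] at h ⊢
        have hne : ((Finset.univ.filter (fun i : Fin n => v < i ∧ E i v)).attach).Nonempty := by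
          by_contra hemp
          rw [Finset.not_nonempty_iff_eq_empty] at hemp
          rw [hemp, Finset.inf_empty] at h
          exact absurd h (lt_irrefl ⊤)
        obtain ⟨i, _, hinf⟩ := Finset.exists_mem_eq_inf _ hne
          (fun i => backwardPass n E w D i.1 + (w i.1 v : WithTop ℝ))
        obtain ⟨-, hlt, hE⟩ := Finset.mem_filter.mp i.2
        rw [hinf] at h ⊢
        have hfi : backwardPass n E w D i.1 < ⊤ := (WithTop.add_lt_top.mp h).1
        obtain ⟨L, hWalk, hW⟩ := ih i.1 (by have h1 : v.val < i.1.val := hlt; have h2 : i.1.val < n := i.1.isLt; omega) hfi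
        refine ⟨L ++ [v], isWalk_concat_s1 hWalk hE, ?_⟩
        rw [hW, walkWeight_concat_s1 w L i.1 v hWalk.2.2.1]
        push_cast
        ring
  intro v
  have h2 : v.val < n := v.isLt
  exact key (n - v.val + 1) v (by omega)

/-- For every `k ≥ 0` and every vertex `v`, if `D_k(v) < +∞` then there
exists a directed walk from the source `s = v_1` to `v` whose weight equals `D_k(v)`.
(Here `V = Fin n` is enumerated so that BFS levels are nondecreasing and unreachable
vertices come after all reachable ones.) -/
theorem stmt1 (n : ℕ) (E : Fin n → Fin n → Prop) [DecidableRel E]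
    (w : Fin n → Fin n → ℝ) (s : Fin n) (hs : s.val = 0)
    (horder : ∀ i j : Fin n, i < j → Reaches E s i → Reaches E s j →
      level E s i ≤ level E s j)
    (hafter : ∀ i j : Fin n, i < j → Reaches E s j → Reaches E s i)
    (k : ℕ) (v : Fin n) (h : Dseq n E w s k v < ⊤) :
    ∃ L, IsWalk E s v L ∧ Dseq n E w s k v = (walkWeight w L : WithTop ℝ) := by
  induction k generalizing v with
  | zero =>
    rw [Dseq] at h ⊢
    by_cases hv : v = s
    · subst hv
      refine ⟨[v], ⟨by simp, by simp, by simp, List.isChain_singleton _⟩, ?_⟩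
      simp [walkWeight]
    · simp [hv] at h
  | succ k ihk =>
    rw [Dseq] at h ⊢
    by_cases hk : k % 2 = 0
    · simp only [hk, if_true] at h ⊢
      exact fp_good n E w s _ (fun u hu => ihk u hu) v h
    · simp only [hk, if_false] at h ⊢
      exact bp_good n E w s _ (fun u hu => ihk u hu) v h
end

section
/- Let u ≠ v with v reachable from u, and let q be the next-to-last vertex of the lexicographically-first shortest path P(u, v) (so (q, v) is its last edge). Then idx(q) = min{ idx(x) : (x, v) ∈ E, x = u or x is reachable from u, and d(u, x) + w(x, v) = d(u, v) } (where d(u, u) = 0), and if q ≠ u then the prefix of P(u, v) ending at q equals P(u, q). -/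
/-- `L` is the lexicographically-first shortest path from `u` to `v`: a minimum-weight
directed path from `u` to `v` whose reversed sequence of vertex indices is
lexicographically smallest among all minimum-weight directed paths from `u` to `v`. -/
def IsLexFirstSP {V : Type} (E : V → V → Prop) (w : V → V → ℝ) (idx : V → ℕ)
    (u v : V) (L : List V) : Prop :=
  IsPath E u v L ∧
  (∀ M, IsPath E u v M → walkWeight w L ≤ walkWeight w M) ∧
  (∀ M, IsPath E u v M → walkWeight w M = walkWeight w L →
    ¬ List.Lex (· < ·) (M.reverse.map idx) (L.reverse.map idx))

/-- `pdist E w u v` is the minimum weight `d(u, v)` of a directed path from `u` to `v`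
(for `v` reachable from `u`); in particular `pdist E w u u = 0`, the weight of the
trivial path. -/
noncomputable def pdist {V : Type} (E : V → V → Prop) (w : V → V → ℝ) (u v : V) : ℝ :=
  sInf {r : ℝ | ∃ L, IsPath E u v L ∧ walkWeight w L = r}

section Stmt9Helpers
variable {V : Type} {E : V → V → Prop} {w : V → V → ℝ} {idx : V → ℕ}
variable {V : Type} {E : V → V → Prop} {w : V → V → ℝ} {idx : V → ℕ}

lemma walkWeight_cons (w : V → V → ℝ) (a b : V) (t : List V) :
    walkWeight w (a :: b :: t) = w a b + walkWeight w (b :: t) := by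
  simp [walkWeight]

lemma walkWeight_single (w : V → V → ℝ) (a : V) : walkWeight w [a] = 0 := by
  simp [walkWeight]

lemma walkWeight_append_single (w : V → V → ℝ) :
    ∀ (L : List V) (x : V), L.getLast? = some x → ∀ (v : V),
      walkWeight w (L ++ [v]) = walkWeight w L + w x v
  | [], x, h => by simp at h
  | [a], x, h => by
    simp at h; subst h; intro v; simp [walkWeight]
  | a :: b :: t, x, h => by
    intro v
    have ih := walkWeight_append_single w (b :: t) x
      (by rwa [List.getLast?_cons_cons] at h) v
    simp only [List.cons_append] at ih ⊢
    rw [walkWeight_cons, ih, walkWeight_cons]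
    ring

lemma chain'_pairwise (htopo : ∀ a b, E a b → idx a < idx b) {L : List V}
    (h : L.Chain' E) : L.Pairwise (fun a b => idx a < idx b) := by
  haveI : IsTrans V (fun a b => idx a < idx b) := ⟨fun _ _ _ => lt_trans⟩
  exact List.isChain_iff_pairwise.mp (h.imp fun {a b} hab => htopo a b hab)

lemma walk_nodup (htopo : ∀ a b, E a b → idx a < idx b) {L : List V}
    (h : L.Chain' E) : L.Nodup :=
  (chain'_pairwise htopo h).imp fun {a b} hab heq => absurd (heq ▸ hab) (lt_irrefl _)

lemma walk_idx_le (htopo : ∀ a b, E a b → idx a < idx b) {u x : V} {L : List V}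
    (h : IsWalk E u x L) : ∀ y ∈ L, idx y ≤ idx x := by
  obtain ⟨hne, _, hlast, hch⟩ := h
  have hx : L.getLast hne = x := by
    have := List.getLast?_eq_getLast hne
    rw [this] at hlast; exact Option.some_injective _ hlast
  have hdec : L = L.dropLast ++ [x] := by
    conv_lhs => rw [← List.dropLast_append_getLast hne, hx]
  have hp := chain'_pairwise htopo hch
  rw [hdec, List.pairwise_append] at hp
  intro y hy
  rw [hdec, List.mem_append] at hy
  rcases hy with hy | hy
  · exact le_of_lt (hp.2.2 y hy x (by simp))
  · simp at hy; subst hy; exact le_rfl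

lemma walk_toPath (htopo : ∀ a b, E a b → idx a < idx b) {u x : V} {L : List V}
    (h : IsWalk E u x L) : IsPath E u x L :=
  ⟨h, walk_nodup htopo h.2.2.2⟩

lemma path_self (hE : ∀ a b, E a b → idx a < idx b) {u : V} {L : List V}
    (h : IsPath E u u L) : L = [u] := by
  obtain ⟨⟨hne, hh, hl, _⟩, hnd⟩ := h
  match L, hne with
  | [a], _ => simp at hh; rw [hh]
  | a :: b :: t, _ =>
    exfalso
    simp at hh
    have hlast : (a :: b :: t).getLast (by simp) = u := by
      have := List.getLast?_eq_getLast (l := a :: b :: t) (by simp)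
      rw [this] at hl; exact Option.some_injective _ hl
    rw [List.getLast_cons (by simp)] at hlast
    have hmem : u ∈ b :: t := hlast ▸ List.getLast_mem (by simp : (b :: t) ≠ [])
    rw [List.nodup_cons] at hnd
    exact hnd.1 (hh ▸ hmem)

lemma pathWeights_finite [Fintype V] (E : V → V → Prop) (w : V → V → ℝ) (u x : V) :
    {r : ℝ | ∃ L, IsPath E u x L ∧ walkWeight w L = r}.Finite := by
  have h1 : {L : List V | IsPath E u x L}.Finite :=
    (List.finite_length_le V (Fintype.card V)).subset fun L hL => hL.2.length_le_card
  exact (h1.image (walkWeight w)).subset fun r ⟨L, h1, h2⟩ => ⟨L, h1, h2⟩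

lemma pdist_le [Fintype V] {u x : V} {L : List V} (h : IsPath E u x L) :
    pdist E w u x ≤ walkWeight w L :=
  csInf_le (pathWeights_finite E w u x).bddBelow ⟨L, h, rfl⟩

lemma pdist_attained [Fintype V] {u x : V} (h : ∃ L, IsPath E u x L) :
    ∃ L, IsPath E u x L ∧ walkWeight w L = pdist E w u x := by
  obtain ⟨L, hL⟩ := h
  have := Set.Nonempty.csInf_mem (s := {r : ℝ | ∃ L, IsPath E u x L ∧ walkWeight w L = r})
    ⟨walkWeight w L, L, hL, rfl⟩ (pathWeights_finite E w u x)
  exact this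

lemma path_concat (htopo : ∀ a b, E a b → idx a < idx b) {u x v : V} {P : List V}
    (hP : IsPath E u x P) (hxv : E x v) :
    IsPath E u v (P ++ [v]) ∧ walkWeight w (P ++ [v]) = walkWeight w P + w x v := by
  obtain ⟨⟨hne, hh, hl, hch⟩, hnd⟩ := hP
  have hx : P.getLast hne = x := by
    have := List.getLast?_eq_getLast hne
    rw [this] at hl; exact Option.some_injective _ hl
  have hvnot : v ∉ P := fun hmem =>
    absurd (htopo x v hxv) (not_lt.mpr (walk_idx_le htopo ⟨hne, hh, hl, hch⟩ v hmem))
  refine ⟨⟨⟨by simp, ?_, List.getLast?_concat, ?_⟩, ?_⟩, ?_⟩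
  · rw [List.head?_append_of_ne_nil _ hne]; exact hh
  · change List.IsChain E (P ++ [v]); rw [List.isChain_append]
    exact ⟨hch, List.isChain_singleton v, fun a ha b hb => by
      rw [hl] at ha; simp at ha hb; rw [← ha, ← hb]; exact hxv⟩
  · rw [List.nodup_append]
    exact ⟨hnd, List.nodup_singleton v, fun a ha b hb hab => by simp at hb; exact hvnot (by rw [← hb, ← hab]; exact ha)⟩
  · exact walkWeight_append_single w P x hl v


lemma getLast_eq_of_getLast? {L : List V} {x : V} (hne : L ≠ []) (h : L.getLast? = some x) :
    L.getLast hne = x := by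
  rw [List.getLast?_eq_getLast hne] at h; exact Option.some_injective _ h

end Stmt9Helpers

/-- In a finite DAG with a topological numbering `idx`, let `u ≠ v` with
`v` reachable from `u`, and let `q` be the next-to-last vertex of the
lexicographically-first shortest path `P(u, v)` (so `(q, v)` is its last edge). Then
`idx q` is the minimum of `{ idx x : (x, v) ∈ E, x = u or x reachable from u, and
d(u, x) + w(x, v) = d(u, v) }`, and if `q ≠ u` then the prefix of `P(u, v)` ending at `q`
(i.e. `L.dropLast`) equals the lexicographically-first shortest path `P(u, q)`. -/
theorem stmt9 (V : Type) [Fintype V] (E : V → V → Prop) (w : V → V → ℝ)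
    (idx : V → ℕ) (hinj : Function.Injective idx)
    (htopo : ∀ a b, E a b → idx a < idx b)
    (u v : V) (huv : u ≠ v) (hr : Reaches E u v)
    (L : List V) (hL : IsLexFirstSP E w idx u v L)
    (q : V) (hq : L.dropLast.getLast? = some q) :
    IsLeast {m : ℕ | ∃ x, idx x = m ∧ E x v ∧ (x = u ∨ Reaches E u x) ∧
        pdist E w u x + w x v = pdist E w u v} (idx q) ∧
    (q ≠ u → IsLexFirstSP E w idx u q L.dropLast) := by
  classical
  obtain ⟨hLpath, hLmin, hLlex⟩ := hL
  have hLne : L ≠ [] := hLpath.1.1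
  have hLhead : L.head? = some u := hLpath.1.2.1
  have hLlast : L.getLast? = some v := hLpath.1.2.2.1
  have hLch : L.Chain' E := hLpath.1.2.2.2
  have hLnd : L.Nodup := hLpath.2
  set M := L.dropLast with hMdef
  have hMne : M ≠ [] := by intro h; rw [h] at hq; simp at hq
  have hqM : M.getLast hMne = q := getLast_eq_of_getLast? hMne hq
  have hLv : L.getLast hLne = v := getLast_eq_of_getLast? hLne hLlast
  have hdecomp : L = M ++ [v] := by
    rw [← hLv]; exact (List.dropLast_append_getLast hLne).symm
  have hMd : M = M.dropLast ++ [q] := by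
    rw [← hqM]; exact (List.dropLast_append_getLast hMne).symm
  have hch2 := hLch
  rw [hdecomp] at hch2; change List.IsChain E (M ++ [v]) at hch2; rw [List.isChain_append] at hch2
  have hEqv : E q v := hch2.2.2 q (Option.mem_def.mpr hq) v rfl
  have hMhead : M.head? = some u := by
    rw [hdecomp, List.head?_append_of_ne_nil _ hMne] at hLhead; exact hLhead
  have hMpath : IsPath E u q M :=
    ⟨⟨hMne, hMhead, hq, hch2.1⟩, hLnd.sublist (List.dropLast_sublist L)⟩
  have hWL : walkWeight w L = walkWeight w M + w q v := by
    rw [hdecomp]; exact walkWeight_append_single w M q hq v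
  have hpv : pdist E w u v = walkWeight w L := by
    refine le_antisymm (pdist_le hLpath) ?_
    obtain ⟨N, hN, hNw⟩ := pdist_attained ⟨L, hLpath⟩
    rw [← hNw]; exact hLmin N hN
  have hpq : pdist E w u q = walkWeight w M := by
    refine le_antisymm (pdist_le hMpath) ?_
    obtain ⟨N, hN, hNw⟩ := pdist_attained ⟨M, hMpath⟩
    obtain ⟨hNv, hNw2⟩ := path_concat htopo hN hEqv
    have h1 := hLmin (N ++ [v]) hNv
    rw [hWL, hNw2] at h1
    linarith [hNw ▸ h1]
  have hsum_q : pdist E w u q + w q v = pdist E w u v := by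
    rw [hpq, hpv, hWL]
  constructor
  · constructor
    · refine ⟨q, rfl, hEqv, ?_, hsum_q⟩
      by_cases hqu : q = u
      · exact Or.inl hqu
      · exact Or.inr ⟨M, hMpath.1⟩
    · rintro m ⟨x, rfl, hExv, hxr, hsum⟩
      by_contra hlt
      push_neg at hlt
      have hex : ∃ N, IsPath E u x N := by
        rcases hxr with h | ⟨W, hW⟩
        · exact ⟨[u], ⟨⟨by simp, by simp, by simp [h], List.isChain_singleton u⟩,
            List.nodup_singleton u⟩⟩
        · exact ⟨W, walk_toPath htopo hW⟩
      obtain ⟨N, hN, hNw⟩ := pdist_attained hex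
      obtain ⟨hNv, hNw2⟩ := path_concat htopo hN hExv
      have hweq : walkWeight w (N ++ [v]) = walkWeight w L := by
        rw [hNw2, hNw, hsum, hpv]
      refine hLlex (N ++ [v]) hNv hweq ?_
      have hNne : N ≠ [] := hN.1.1
      have hNlast : N.getLast hNne = x := getLast_eq_of_getLast? hNne hN.1.2.2.1
      have hNd : N = N.dropLast ++ [x] := by
        rw [← hNlast]; exact (List.dropLast_append_getLast hNne).symm
      rw [hdecomp, hNd, hMd]
      simp only [List.reverse_append, List.reverse_singleton, List.singleton_append,
        List.cons_append, List.map_cons]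
      exact List.Lex.cons (List.Lex.rel hlt)
  · intro _
    refine ⟨hMpath, ?_, ?_⟩
    · intro N hN
      obtain ⟨hNv, hNw2⟩ := path_concat htopo hN hEqv
      have h1 := hLmin (N ++ [v]) hNv
      rw [hWL, hNw2] at h1
      linarith
    · intro N hN hNweq hlex
      obtain ⟨hNv, hNw2⟩ := path_concat htopo hN hEqv
      refine hLlex (N ++ [v]) hNv (by rw [hNw2, hNweq, hWL]) ?_
      rw [hdecomp]
      simp only [List.reverse_append, List.reverse_singleton, List.singleton_append,
        List.cons_append, List.map_cons]
      exact List.Lex.cons hlex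
end

section
/- Let (X, ≤) be a finite nonempty partially ordered set in which, for every x ∈ X, the principal upper set { y ∈ X : x ≤ y } is totally ordered. Then the minimum number of chains (totally ordered subsets) whose union is X equals the number of minimal elements of X. (In particular, the number of leaves of a rooted in-tree equals the minimum number of directed paths covering the tree.) -/
/-- Let `X` be a finite nonempty partially ordered set in which, for
every `x`, the principal upper set `{ y : x ≤ y }` is totally ordered. Then the minimum
number of chains (totally ordered subsets) whose union is `X` equals the number of
minimal elements of `X`. (In particular, the number of leaves of a rooted in-tree equals
the minimum number of directed paths covering the tree.) -/
theorem stmt12 (X : Type) [Fintype X] [Nonempty X] [PartialOrder X]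
    (hup : ∀ x : X, IsChain (· ≤ ·) {y : X | x ≤ y}) :
    sInf {k : ℕ | ∃ c : Fin k → Set X,
        (∀ i, IsChain (· ≤ ·) (c i)) ∧ (⋃ i, c i) = Set.univ} =
      Nat.card {x : X // IsMin x} := by
  classical
  have hcard : Nat.card {x : X // IsMin x} = Fintype.card {x : X // IsMin x} :=
    Nat.card_eq_fintype_card
  apply le_antisymm
  · -- upper bound: cover with one chain per minimal element
    apply Nat.sInf_le
    rw [hcard]
    refine ⟨fun i => {y : X | ((Fintype.equivFin {x : X // IsMin x}).symm i : X) ≤ y},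
      fun i => hup _, ?_⟩
    ext a
    simp only [Set.mem_iUnion, Set.mem_setOf_eq, Set.mem_univ, iff_true]
    obtain ⟨b, hb, hmin⟩ := exists_minimal_le_of_wellFoundedLT (fun _ : X => True) a trivial
    refine ⟨Fintype.equivFin {x : X // IsMin x} ⟨b, ?_⟩, ?_⟩
    · intro y hy
      exact hmin.2 trivial hy
    · simpa using hb
  · -- lower bound: each chain contains at most one minimal element
    refine le_csInf ⟨Fintype.card X, fun i => {(Fintype.equivFin X).symm i},
      fun i => Set.Subsingleton.isChain (Set.subsingleton_singleton), ?_⟩ ?_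
    · ext a
      simp only [Set.mem_iUnion, Set.mem_singleton_iff, Set.mem_univ, iff_true]
      exact ⟨Fintype.equivFin X a, by simp⟩
    · rintro k ⟨c, hc, hcov⟩
      rw [hcard]
      have : ∀ x : {x : X // IsMin x}, ∃ i, (x : X) ∈ c i := by
        intro x
        have := hcov ▸ Set.mem_univ (x : X)
        simpa [Set.mem_iUnion] using this
      choose f hf using this
      have hinj : Function.Injective f := by
        intro x y hxy
        have hx := hf x
        have hy := hf y
        rw [hxy] at hx
        have : (x : X) = (y : X) := by
          rcases eq_or_ne (x : X) (y : X) with h | h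
          · exact h
          · rcases (hc (f y)) hx hy h with h' | h'
            · exact le_antisymm h' (y.2 h')
            · exact le_antisymm (x.2 h') h'
        exact Subtype.ext this
      simpa using Fintype.card_le_of_injective f hinj
end

section
/- Let n ≥ 2 and 1 ≤ d ≤ n be integers and c > 0 a real number. Let V be a finite set with |V| = n and let F be a family of subsets of V such that |F| ≤ n^c and |A| ≥ d for every A ∈ F. Let s = ⌈(c + 1) · n · ln(n) / d⌉ and let X_1, …, X_s be independent random variables, each uniformly distributed on V. Then the probability that every A ∈ F contains at least one of X_1, …, X_s is at least 1 − 1/n. -/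
/-- Let `n ≥ 2` and `1 ≤ d ≤ n` be integers and `c > 0` a real number.
Let `V` be a finite set with `|V| = n` and `F` a family of subsets of `V` with
`|F| ≤ n ^ c` and `|A| ≥ d` for every `A ∈ F`. Let `s = ⌈(c + 1) · n · ln n / d⌉` and let
`X_1, …, X_s` be independent uniform random variables on `V`, i.e. a uniform random point
of `Fin s → V`. Then the probability that every `A ∈ F` contains at least one of the
`X_i` — the proportion of tuples `f : Fin s → V` such that every `A ∈ F` meets the range
of `f` — is at least `1 − 1/n`. -/
theorem stmt13 (n d : ℕ) (hn : 2 ≤ n) (hd1 : 1 ≤ d) (hdn : d ≤ n)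
    (c : ℝ) (hc : 0 < c)
    (V : Type) [Fintype V] [DecidableEq V] (hV : Fintype.card V = n)
    (F : Finset (Finset V)) (hF : (F.card : ℝ) ≤ (n : ℝ) ^ c)
    (hFd : ∀ A ∈ F, d ≤ A.card)
    (s : ℕ) (hs : s = ⌈(c + 1) * n * Real.log n / d⌉₊) :
    (1 : ℝ) - 1 / n ≤
      (Nat.card {f : Fin s → V // ∀ A ∈ F, ∃ i, f i ∈ A} : ℝ) /
        (Fintype.card (Fin s → V) : ℝ) := by
  classical
  have hn0 : 0 < n := by omega
  have hnR : (0:ℝ) < n := by exact_mod_cast hn0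
  have hdR : (0:ℝ) < d := by exact_mod_cast hd1
  have hdnR : (d:ℝ) ≤ n := by exact_mod_cast hdn
  have hlogn : 0 < Real.log n := Real.log_pos (by exact_mod_cast hn)
  have hsge : (c + 1) * n * Real.log n / d ≤ (s : ℝ) := by
    rw [hs]; exact Nat.le_ceil _
  set P : (Fin s → V) → Prop := fun f => ∀ A ∈ F, ∃ i, f i ∈ A with hP
  have hNat : (Nat.card {f : Fin s → V // ∀ A ∈ F, ∃ i, f i ∈ A})
      = (Finset.univ.filter P).card := by
    rw [Nat.card_eq_fintype_card, Fintype.card_subtype]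
  have hcardfun : Fintype.card (Fin s → V) = n ^ s := by
    simp [Fintype.card_fun, hV]
  have hsplit : (Finset.univ.filter P).card
      + (Finset.univ.filter (fun f => ¬ P f)).card = n ^ s := by
    rw [Finset.card_filter_add_card_filter_not, Finset.card_univ, hcardfun]
  have hbadsub : Finset.univ.filter (fun f => ¬ P f)
      ⊆ F.biUnion (fun A => Fintype.piFinset (fun _ : Fin s => Aᶜ)) := by
    intro f hf
    simp only [Finset.mem_filter, hP] at hf
    push_neg at hf
    obtain ⟨A, hA, hAi⟩ := hf.2
    exact Finset.mem_biUnion.mpr ⟨A, hA,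
      Fintype.mem_piFinset.mpr (fun i => Finset.mem_compl.mpr (hAi i))⟩
  have hbadle : (Finset.univ.filter (fun f => ¬ P f)).card ≤ F.card * (n - d) ^ s := by
    calc (Finset.univ.filter (fun f => ¬ P f)).card
        ≤ (F.biUnion (fun A => Fintype.piFinset (fun _ : Fin s => Aᶜ))).card :=
          Finset.card_le_card hbadsub
      _ ≤ ∑ A ∈ F, (Fintype.piFinset (fun _ : Fin s => Aᶜ)).card :=
          Finset.card_biUnion_le
      _ ≤ ∑ A ∈ F, (n - d) ^ s := by
          refine Finset.sum_le_sum (fun A hA => ?_)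
          rw [Fintype.card_piFinset]
          simp only [Finset.card_compl, hV, Finset.prod_const, Finset.card_univ,
            Fintype.card_fin]
          exact Nat.pow_le_pow_left (Nat.sub_le_sub_left (hFd A hA) n) s
      _ = F.card * (n - d) ^ s := by rw [Finset.sum_const, smul_eq_mul]
  -- real-number key inequality
  have hndR : ((n - d : ℕ) : ℝ) = (n : ℝ) - d := by
    rw [Nat.cast_sub hdn]
  have h1 : ((n:ℝ) - d) / n ≤ Real.exp (-(d/n)) := by
    have h := Real.add_one_le_exp (-(d/n))
    have : ((n:ℝ) - d) / n = 1 - d/n := by field_simp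
    rw [this]; linarith
  have h0 : (0:ℝ) ≤ ((n:ℝ) - d) / n := by
    apply div_nonneg <;> linarith
  have h2 : (((n:ℝ) - d) / n) ^ s ≤ Real.exp (-((s:ℝ) * (d/n))) := by
    calc (((n:ℝ) - d) / n) ^ s ≤ Real.exp (-(d/n)) ^ s := pow_le_pow_left₀ h0 h1 s
      _ = Real.exp ((s:ℝ) * -(d/n)) := (Real.exp_nat_mul _ s).symm
      _ = Real.exp (-((s:ℝ) * (d/n))) := by ring_nf
  have h3 : (c+1) * Real.log n ≤ (s:ℝ) * (d/n) := by
    have hmul := mul_le_mul_of_nonneg_right hsge (le_of_lt (div_pos hdR hnR))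
    calc (c+1) * Real.log n = ((c+1) * n * Real.log n / d) * (d/n) := by
          field_simp
      _ ≤ (s:ℝ) * (d/n) := hmul
  have h4 : Real.exp (-((c+1) * Real.log n)) = (n:ℝ) ^ (-(c+1)) := by
    rw [Real.rpow_def_of_pos hnR]
    congr 1; ring
  have h5 : (((n:ℝ) - d) / n) ^ s ≤ (n:ℝ) ^ (-(c+1)) := by
    rw [← h4]
    exact h2.trans (Real.exp_le_exp.mpr (by linarith))
  have key : (F.card : ℝ) * ((n:ℝ) - d) ^ s ≤ (n:ℝ) ^ s / n := by
    have hpow : ((n:ℝ) - d) ^ s = (n:ℝ) ^ s * (((n:ℝ) - d) / n) ^ s := by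
      rw [div_pow]; field_simp
    have hFnn : (0:ℝ) ≤ (F.card : ℝ) := Nat.cast_nonneg _
    have hns : (0:ℝ) ≤ (n:ℝ) ^ s := by positivity
    calc (F.card : ℝ) * ((n:ℝ) - d) ^ s
        ≤ (n:ℝ) ^ c * ((n:ℝ) ^ s * (((n:ℝ) - d) / n) ^ s) := by
          rw [← hpow]
          exact mul_le_mul_of_nonneg_right hF (pow_nonneg (by linarith) s)
      _ ≤ (n:ℝ) ^ c * ((n:ℝ) ^ s * (n:ℝ) ^ (-(c+1))) := by
          apply mul_le_mul_of_nonneg_left _ (by positivity)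
          exact mul_le_mul_of_nonneg_left h5 hns
      _ = (n:ℝ) ^ s * ((n:ℝ) ^ c * (n:ℝ) ^ (-(c+1))) := by ring
      _ = (n:ℝ) ^ s * (n:ℝ) ^ (c + -(c+1)) := by rw [Real.rpow_add hnR]
      _ = (n:ℝ) ^ s / n := by
          have : c + -(c+1) = -1 := by ring
          rw [this, Real.rpow_neg_one]
          ring
  -- assemble
  rw [hNat, hcardfun]
  rw [le_div_iff₀ (by positivity)]
  have hbadR : ((Finset.univ.filter (fun f => ¬ P f)).card : ℝ) ≤ (n:ℝ) ^ s / n := by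
    calc ((Finset.univ.filter (fun f => ¬ P f)).card : ℝ)
        ≤ (F.card : ℝ) * ((n:ℝ) - d) ^ s := by
          rw [← hndR]
          exact_mod_cast hbadle
      _ ≤ (n:ℝ) ^ s / n := key
  have hsplitR : ((Finset.univ.filter P).card : ℝ)
      + ((Finset.univ.filter (fun f => ¬ P f)).card : ℝ) = (n:ℝ) ^ s := by
    exact_mod_cast hsplit
  have hexp : (1 - 1 / (n:ℝ)) * (n:ℝ) ^ s = (n:ℝ) ^ s - (n:ℝ) ^ s / n := by
    field_simp
  push_cast
  rw [hexp]
  linarith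
end
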